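/- Let G and H be connected finite simple graphs, where G has minimum degree d ≥ 1 and H has maximum degree Δ(H) ≥ d. Let S ⊆ V(H) be a maximum G-free subset of V(H); among all maximum G-free subsets, suppose S is chosen so that the induced subgraph H∖S has as few connected (Δ(H)−d)-regular subgraphs as possible, and subject to that, so that H[S] has the minimum possible number of connected components. Suppose H∖S has a connected (Δ(H)−d)-regular subgraph H_0, and for each v ∈ V(H_0) let G_v denote the unique copy of G contained in H[S ∪ {v}]. If v, w ∈ V(H_0) are distinct vertices such that the subgraphs G_v − v and G_w − w of H are different, then v and w have no common neighbor in S. -/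

import Mathlib

open SimpleGraph

/-- `H` contains a subgraph isomorphic to `G`, i.e. there is an injective graph
homomorphism from `G` to `H`. -/
def HasCopy {α β : Type*} (G : SimpleGraph α) (H : SimpleGraph β) : Prop :=
  ∃ f : G →g H, Function.Injective f

/-- `S` is a `G`-free subset of the vertices of `H` of maximum cardinality. -/
def MaxFreeSubset {α V : Type*} (G : SimpleGraph α) (H : SimpleGraph V) (S : Set V) :
    Prop :=
  ¬ HasCopy G (H.induce S) ∧
    ∀ T : Set V, ¬ HasCopy G (H.induce T) → T.ncard ≤ S.ncard

/-- `H'` is a connected `r`-regular subgraph of `H ∖ S` (the subgraph of `H` induced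
on the complement of `S`). -/
def IsRegConnSubgraphOff {V : Type*} (H : SimpleGraph V) (S : Set V) (r : ℕ)
    (H' : H.Subgraph) : Prop :=
  H'.verts ⊆ Sᶜ ∧ H'.Connected ∧ ∀ v ∈ H'.verts, (H'.neighborSet v).ncard = r

/-- The number of connected `r`-regular subgraphs of `H ∖ S`. -/
noncomputable def regCount {V : Type*} (H : SimpleGraph V) (S : Set V) (r : ℕ) : ℕ :=
  {H' : H.Subgraph | IsRegConnSubgraphOff H S r H'}.ncard

/-- The number of connected components of the induced subgraph `H[S]`. -/
noncomputable def compCount {V : Type*} (H : SimpleGraph V) (S : Set V) : ℕ :=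
  Nat.card (H.induce S).ConnectedComponent

/-- `K` is a copy of `G` inside `H[W]`: a subgraph of `H` whose vertices lie in `W`
and which is isomorphic to `G`. -/
def IsCopyIn {α V : Type*} (G : SimpleGraph α) (H : SimpleGraph V) (W : Set V)
    (K : H.Subgraph) : Prop :=
  K.verts ⊆ W ∧ Nonempty (K.coe ≃g G)

section ClaimFourAux

set_option linter.unusedSectionVars false

variable {α V : Type*} [Fintype α] [Fintype V] {G : SimpleGraph α} {H : SimpleGraph V}

private instance (H : SimpleGraph V) : Finite H.Subgraph := by
  classical
  have hinj : Function.Injective (fun K : H.Subgraph => (K.verts, K.Adj)) := by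
    intro a b h
    exact SimpleGraph.Subgraph.ext (congrArg Prod.fst h) (congrArg Prod.snd h)
  exact Finite.of_injective _ hinj

private lemma hasCopy_of_isCopyIn {W : Set V} {K : H.Subgraph}
    (hKW : K.verts ⊆ W) (hiso : Nonempty (K.coe ≃g G)) : HasCopy G (H.induce W) := by
  obtain ⟨φ⟩ := hiso
  refine ⟨⟨fun a => ⟨((φ.symm a : K.verts) : V), hKW (φ.symm a).prop⟩, ?_⟩, ?_⟩
  · intro a b hab
    have h1 : K.coe.Adj (φ.symm a) (φ.symm b) := φ.symm.map_rel_iff.mpr hab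
    exact K.adj_sub h1
  · intro a b hab
    have h1 := congrArg Subtype.val hab
    exact φ.symm.injective (Subtype.ext h1)

private lemma isCopyIn_of_hasCopy {W : Set V} (h : HasCopy G (H.induce W)) :
    ∃ K : H.Subgraph, IsCopyIn G H W K := by
  obtain ⟨f, hf⟩ := h
  set g : α → V := fun a => ((f a : W) : V) with hg
  have hginj : Function.Injective g := fun a b hab => hf (Subtype.ext hab)
  refine ⟨⟨Set.range g, fun x y => ∃ a b, G.Adj a b ∧ g a = x ∧ g b = y,
      by rintro x y ⟨a, b, hab, rfl, rfl⟩; exact f.map_adj hab,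
      by rintro x y ⟨a, b, hab, rfl, rfl⟩; exact ⟨a, rfl⟩,
      ⟨by rintro x y ⟨a, b, hab, rfl, rfl⟩; exact ⟨b, a, hab.symm, rfl, rfl⟩⟩⟩,
    fun x hx => by obtain ⟨a, rfl⟩ := hx; exact (f a).prop, ⟨?_⟩⟩
  refine RelIso.symm ⟨Equiv.ofInjective g hginj, ?_⟩
  intro a b
  show (∃ a' b', G.Adj a' b' ∧ g a' = g a ∧ g b' = g b) ↔ G.Adj a b
  constructor
  · rintro ⟨a', b', hab, ha, hb⟩
    rwa [hginj ha, hginj hb] at hab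
  · intro hab
    exact ⟨a, b, hab, rfl, rfl⟩

private lemma not_free_copy {T : Set V} (hfree : ¬ HasCopy G (H.induce T))
    {K : H.Subgraph} (hKT : K.verts ⊆ T) (hiso : Nonempty (K.coe ≃g G)) : False :=
  hfree (hasCopy_of_isCopyIn hKT hiso)

private lemma exists_copy_insert {T : Set V} (hT : MaxFreeSubset G H T) {z : V}
    (hz : z ∉ T) : ∃ K : H.Subgraph, IsCopyIn G H (insert z T) K := by
  apply isCopyIn_of_hasCopy
  by_contra h
  have h2 := hT.2 _ h
  rw [Set.ncard_insert_of_notMem hz (Set.toFinite T)] at h2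
  omega


private lemma copy_degree [DecidableRel G.Adj] {K : H.Subgraph} (hiso : Nonempty (K.coe ≃g G)) {y : V}
    (hy : y ∈ K.verts) : G.minDegree ≤ (K.neighborSet y).ncard := by
  classical
  obtain ⟨φ⟩ := hiso
  have e1 : (K.coe.neighborSet ⟨y, hy⟩) ≃ (K.neighborSet y) :=
    SimpleGraph.Subgraph.coeNeighborSetEquiv ⟨y, hy⟩
  have e2 : (K.coe.neighborSet ⟨y, hy⟩) ≃ (G.neighborSet (φ ⟨y, hy⟩)) :=
    φ.mapNeighborSet ⟨y, hy⟩
  have hcard : (K.neighborSet y).ncard = G.degree (φ ⟨y, hy⟩) := by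
    rw [← Nat.card_coe_set_eq, Nat.card_congr (e1.symm.trans e2),
      Nat.card_eq_fintype_card, SimpleGraph.card_neighborSet_eq_degree]
  rw [hcard]
  exact SimpleGraph.minDegree_le_degree G (φ ⟨y, hy⟩)

private lemma core [DecidableRel G.Adj] [DecidableRel H.Adj] (hΔd : G.minDegree ≤ H.maxDegree)
    {T : Set V} (hT : MaxFreeSubset G H T)
    {H'' : H.Subgraph} (hH'' : IsRegConnSubgraphOff H T (H.maxDegree - G.minDegree) H'')
    {y : V} (hy : y ∈ H''.verts)
    {K : H.Subgraph} (hKW : K.verts ⊆ insert y T) (hiso : Nonempty (K.coe ≃g G)) :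
    K.neighborSet y = H.neighborSet y ∩ T ∧
      H''.neighborSet y = H.neighborSet y ∩ Tᶜ ∧
      (H.neighborSet y ∩ T).ncard = G.minDegree ∧ y ∈ K.verts := by
  classical
  have hyT : y ∉ T := hH''.1 hy
  have hyK : y ∈ K.verts := by
    by_contra hyK
    refine not_free_copy hT.1 (fun z hz => ?_) hiso
    rcases hKW hz with rfl | hzT
    · exact absurd hz hyK
    · exact hzT
  have hKsub : K.neighborSet y ⊆ H.neighborSet y ∩ T := by
    intro z hz
    have hadj : K.Adj y z := hz
    refine ⟨hadj.adj_sub, ?_⟩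
    rcases hKW hadj.snd_mem with rfl | hzT
    · exact absurd rfl hadj.adj_sub.ne
    · exact hzT
  have hH''sub : H''.neighborSet y ⊆ H.neighborSet y ∩ Tᶜ := by
    intro z hz
    have hadj : H''.Adj y z := hz
    exact ⟨hadj.adj_sub, hH''.1 hadj.snd_mem⟩
  have hdK : G.minDegree ≤ (K.neighborSet y).ncard := copy_degree hiso hyK
  have hrH : (H''.neighborSet y).ncard = H.maxDegree - G.minDegree := hH''.2.2 y hy
  have hdisj : Disjoint (H.neighborSet y ∩ T) (H.neighborSet y ∩ Tᶜ) := by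
    apply Set.disjoint_of_subset (Set.inter_subset_right) (Set.inter_subset_right)
    exact disjoint_compl_right
  have hunion : (H.neighborSet y ∩ T) ∪ (H.neighborSet y ∩ Tᶜ) = H.neighborSet y := by
    rw [← Set.inter_union_distrib_left, Set.union_compl_self, Set.inter_univ]
  have hsum : (H.neighborSet y ∩ T).ncard + (H.neighborSet y ∩ Tᶜ).ncard
      = (H.neighborSet y).ncard := by
    rw [← Set.ncard_union_eq hdisj (Set.toFinite _) (Set.toFinite _), hunion]
  have hdeg : (H.neighborSet y).ncard = H.degree y := by
    rw [← Nat.card_coe_set_eq, Nat.card_eq_fintype_card,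
      SimpleGraph.card_neighborSet_eq_degree]
  have hdegle : H.degree y ≤ H.maxDegree := SimpleGraph.degree_le_maxDegree H y
  have h1 : G.minDegree ≤ (H.neighborSet y ∩ T).ncard :=
    le_trans hdK (Set.ncard_le_ncard hKsub (Set.toFinite _))
  have h2 : H.maxDegree - G.minDegree ≤ (H.neighborSet y ∩ Tᶜ).ncard :=
    hrH ▸ Set.ncard_le_ncard hH''sub (Set.toFinite _)
  have hTeq : (H.neighborSet y ∩ T).ncard = G.minDegree := by omega
  have hCeq : (H.neighborSet y ∩ Tᶜ).ncard = H.maxDegree - G.minDegree := by omega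
  refine ⟨?_, ?_, hTeq, hyK⟩
  · exact (Set.eq_of_subset_of_ncard_le hKsub (by omega) (Set.toFinite _))
  · exact (Set.eq_of_subset_of_ncard_le hH''sub (by omega) (Set.toFinite _))


private lemma reg_nbr_eq [DecidableRel G.Adj] [DecidableRel H.Adj]
    (hΔd : G.minDegree ≤ H.maxDegree)
    {T : Set V} (hT : MaxFreeSubset G H T)
    {C : H.Subgraph} (hC : IsRegConnSubgraphOff H T (H.maxDegree - G.minDegree) C)
    {y : V} (hy : y ∈ C.verts) :
    C.neighborSet y = H.neighborSet y ∩ Tᶜ := by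
  obtain ⟨K, hK1, hK2⟩ := exists_copy_insert hT (hC.1 hy)
  exact (core hΔd hT hC hy hK1 hK2).2.1

private lemma reg_unique [DecidableRel G.Adj] [DecidableRel H.Adj]
    (hΔd : G.minDegree ≤ H.maxDegree)
    {T : Set V} (hT : MaxFreeSubset G H T)
    {A B : H.Subgraph}
    (hA : IsRegConnSubgraphOff H T (H.maxDegree - G.minDegree) A)
    (hB : IsRegConnSubgraphOff H T (H.maxDegree - G.minDegree) B)
    {x : V} (hxA : x ∈ A.verts) (hxB : x ∈ B.verts) : A = B := by
  classical
  have step : ∀ (C D : H.Subgraph),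
      IsRegConnSubgraphOff H T (H.maxDegree - G.minDegree) C →
      IsRegConnSubgraphOff H T (H.maxDegree - G.minDegree) D →
      ∀ (a b : C.verts), C.coe.Walk a b → (a : V) ∈ D.verts → (b : V) ∈ D.verts := by
    intro C D hC hD a b p
    induction p with
    | nil => exact id
    | @cons a c b h p ih =>
      intro ha
      apply ih
      have hadj : C.Adj (a : V) (c : V) := h
      have hmem : (c : V) ∈ C.neighborSet (a : V) := hadj
      rw [reg_nbr_eq hΔd hT hC a.2, ← reg_nbr_eq hΔd hT hD ha] at hmem
      exact (SimpleGraph.Subgraph.mem_neighborSet _ _ _ |>.mp hmem).snd_mem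
  have hAB : A.verts ⊆ B.verts := by
    intro y hy
    obtain ⟨p⟩ := hA.2.1.coe ⟨x, hxA⟩ ⟨y, hy⟩
    exact step A B hA hB _ _ p hxB
  have hBA : B.verts ⊆ A.verts := by
    intro y hy
    obtain ⟨p⟩ := hB.2.1.coe ⟨x, hxB⟩ ⟨y, hy⟩
    exact step B A hB hA _ _ p hxA
  have hverts : A.verts = B.verts := subset_antisymm hAB hBA
  refine SimpleGraph.Subgraph.ext hverts ?_
  funext a b
  apply propext
  constructor
  · intro hadj
    have haA : a ∈ A.verts := hadj.fst_mem
    have hmem : b ∈ A.neighborSet a := hadj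
    rw [reg_nbr_eq hΔd hT hA haA, ← reg_nbr_eq hΔd hT hB (hverts ▸ haA)] at hmem
    exact hmem
  · intro hadj
    have haB : a ∈ B.verts := hadj.fst_mem
    have hmem : b ∈ B.neighborSet a := hadj
    rw [reg_nbr_eq hΔd hT hB haB, ← reg_nbr_eq hΔd hT hA (hverts ▸ haB)] at hmem
    exact hmem


private lemma swap_lemma [DecidableRel G.Adj] [DecidableRel H.Adj]
    (hΔd : G.minDegree ≤ H.maxDegree)
    {S : Set V} (hS : MaxFreeSubset G H S)
    (hreg : ∀ T : Set V, MaxFreeSubset G H T →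
      regCount H S (H.maxDegree - G.minDegree) ≤ regCount H T (H.maxDegree - G.minDegree))
    {H₀ : H.Subgraph} (hH₀ : IsRegConnSubgraphOff H S (H.maxDegree - G.minDegree) H₀)
    {x : V} (hx : x ∈ H₀.verts)
    {Gx : H.Subgraph} (hGx : IsCopyIn G H (insert x S) Gx)
    (hGxU : ∀ K : H.Subgraph, IsCopyIn G H (insert x S) K → K = Gx)
    {y : V} (hyG : y ∈ Gx.verts) (hyx : y ≠ x) :
    MaxFreeSubset G H (insert x S \ {y}) ∧
    regCount H (insert x S \ {y}) (H.maxDegree - G.minDegree)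
      = regCount H S (H.maxDegree - G.minDegree) ∧
    ∃ H'' : H.Subgraph,
      IsRegConnSubgraphOff H (insert x S \ {y}) (H.maxDegree - G.minDegree) H'' ∧
      y ∈ H''.verts := by
  classical
  set r := H.maxDegree - G.minDegree with hr
  have hxS : x ∉ S := fun h => (hH₀.1 hx) h
  have hyS : y ∈ S := (hGx.1 hyG).resolve_left hyx
  set T : Set V := insert x S \ {y} with hT
  have hyT : y ∉ T := fun h => h.2 rfl
  have hxT : x ∈ T := ⟨Set.mem_insert _ _, fun h => hyx (by simpa using h.symm)⟩
  have hfree : ¬ HasCopy G (H.induce T) := by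
    intro h
    obtain ⟨K, hK1, hK2⟩ := isCopyIn_of_hasCopy h
    have hKGx : K = Gx := hGxU K ⟨fun z hz => (hK1 hz).1, hK2⟩
    rw [hKGx] at hK1
    exact hyT (hK1 hyG)
  have hTcard : T.ncard = S.ncard := by
    rw [hT, Set.ncard_diff_singleton_of_mem (Set.mem_insert_of_mem _ hyS),
      Set.ncard_insert_of_notMem hxS (Set.toFinite _)]
    omega
  have hTmax : MaxFreeSubset G H T := ⟨hfree, fun T' h => (hS.2 T' h).trans_eq hTcard.symm⟩
  -- membership transfers
  have hTtoS : ∀ H' : H.Subgraph, IsRegConnSubgraphOff H T r H' → y ∉ H'.verts →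
      IsRegConnSubgraphOff H S r H' ∧ x ∉ H'.verts := by
    intro H' h1 h2
    have hsub : H'.verts ⊆ Sᶜ ∩ {x}ᶜ := by
      intro z hz
      have hzT : z ∈ Tᶜ := h1.1 hz
      have hzy : z ≠ y := fun h => h2 (h ▸ hz)
      have : z ∉ insert x S := by
        intro hmem
        exact hzT ⟨hmem, hzy⟩
      constructor
      · intro hzS; exact this (Set.mem_insert_of_mem _ hzS)
      · intro hzx; exact this (by simpa using (Set.mem_singleton_iff.mp hzx) ▸ Set.mem_insert x S)
    exact ⟨⟨fun z hz => (hsub hz).1, h1.2.1, h1.2.2⟩, fun hxH => (hsub hxH).2 rfl⟩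
  have hStoT : ∀ H' : H.Subgraph, IsRegConnSubgraphOff H S r H' → x ∉ H'.verts →
      IsRegConnSubgraphOff H T r H' := by
    intro H' h1 h2
    refine ⟨fun z hz => ?_, h1.2.1, h1.2.2⟩
    intro hzT
    rcases hzT.1 with rfl | hzS
    · exact h2 hz
    · exact (h1.1 hz) hzS
  have hH₀mem : H₀ ∈ {H' : H.Subgraph | IsRegConnSubgraphOff H S r H'} := hH₀
  -- existence of a regular subgraph through y
  have hex : ∃ H'' : H.Subgraph, IsRegConnSubgraphOff H T r H'' ∧ y ∈ H''.verts := by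
    by_contra hno
    push_neg at hno
    have hsub2 : {H' : H.Subgraph | IsRegConnSubgraphOff H T r H'} ⊆
        {H' : H.Subgraph | IsRegConnSubgraphOff H S r H'} \ {H₀} := by
      intro H' h1
      obtain ⟨hRS, hxH⟩ := hTtoS H' h1 (hno H' h1)
      refine ⟨hRS, ?_⟩
      intro h
      rw [Set.mem_singleton_iff] at h
      exact hxH (h ▸ hx)
    have hle : regCount H T r ≤ regCount H S r - 1 := by
      have h3 := Set.ncard_le_ncard hsub2 (Set.toFinite _)
      rwa [Set.ncard_diff_singleton_of_mem hH₀mem] at h3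
    have hge : regCount H S r ≤ regCount H T r := hreg T hTmax
    have hpos : 0 < regCount H S r :=
      (Set.ncard_pos (Set.toFinite _)).mpr ⟨H₀, hH₀mem⟩
    omega
  obtain ⟨H''y, hH''y, hyH''⟩ := hex
  -- regCount equality
  have hle : regCount H T r ≤ regCount H S r := by
    have hmaps : ∀ H' ∈ {H' : H.Subgraph | IsRegConnSubgraphOff H T r H'},
        (if y ∈ H'.verts then H₀ else H') ∈
          {H' : H.Subgraph | IsRegConnSubgraphOff H S r H'} := by
      intro H' h1
      by_cases hyH : y ∈ H'.verts
      · simpa [hyH] using hH₀mem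
      · simpa [hyH] using (hTtoS H' h1 hyH).1
    have hinj : Set.InjOn (fun H' : H.Subgraph => if y ∈ H'.verts then H₀ else H')
        {H' : H.Subgraph | IsRegConnSubgraphOff H T r H'} := by
      intro a ha b hb hab
      by_cases hya : y ∈ a.verts <;> by_cases hyb : y ∈ b.verts
      · exact reg_unique hΔd hTmax ha hb hya hyb
      · exfalso
        simp only [hya, hyb, if_true, if_false] at hab
        have hxb : x ∈ b.verts := hab ▸ hx
        exact ((hTtoS b hb hyb).2) hxb
      · exfalso
        simp only [hya, hyb, if_true, if_false] at hab
        have hxa : x ∈ a.verts := hab ▸ hx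
        exact ((hTtoS a ha hya).2) hxa
      · simpa [hya, hyb] using hab
    exact Set.ncard_le_ncard_of_injOn _ hmaps hinj (Set.toFinite _)
  exact ⟨hTmax, le_antisymm hle (hreg T hTmax), H''y, hH''y, hyH''⟩


private lemma structure_lemma [DecidableRel G.Adj] [DecidableRel H.Adj]
    (hΔd : G.minDegree ≤ H.maxDegree)
    {S : Set V} (hS : MaxFreeSubset G H S)
    (hreg : ∀ T : Set V, MaxFreeSubset G H T →
      regCount H S (H.maxDegree - G.minDegree) ≤ regCount H T (H.maxDegree - G.minDegree))
    {H₀ : H.Subgraph} (hH₀ : IsRegConnSubgraphOff H S (H.maxDegree - G.minDegree) H₀)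
    {x : V} (hx : x ∈ H₀.verts)
    {Gx : H.Subgraph} (hGx : IsCopyIn G H (insert x S) Gx)
    (hGxU : ∀ K : H.Subgraph, IsCopyIn G H (insert x S) K → K = Gx) :
    x ∈ Gx.verts ∧ Gx.neighborSet x = H.neighborSet x ∩ S ∧
      ∀ y ∈ Gx.verts, y ≠ x →
        y ∈ S ∧ Gx.neighborSet y = H.neighborSet y ∩ (insert x S) := by
  classical
  have hxS : x ∉ S := fun h => (hH₀.1 hx) h
  have hGxW : Gx.verts ⊆ insert x S := hGx.1
  have hins : insert x S = insert x (S : Set V) := rfl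
  obtain ⟨hP1, _, _, hxGx⟩ := core hΔd hS hH₀ hx hGxW hGx.2
  have hP1' : Gx.neighborSet x = H.neighborSet x ∩ S := hP1
  refine ⟨hxGx, hP1', ?_⟩
  intro y hyG hyx
  have hyS : y ∈ S := (hGx.1 hyG).resolve_left hyx
  obtain ⟨hTmax, hTcount, H'', hH'', hyH''⟩ :=
    swap_lemma hΔd hS hreg hH₀ hx hGx hGxU hyG hyx
  have hsub : Gx.verts ⊆ insert y (insert x S \ {y}) := by
    intro z hz
    by_cases hzy : z = y
    · exact hzy ▸ Set.mem_insert _ _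
    · exact Set.mem_insert_of_mem _ ⟨hGx.1 hz, hzy⟩
  obtain ⟨hKnbr2, _, _, _⟩ := core hΔd hTmax hH'' hyH'' hsub hGx.2
  refine ⟨hyS, ?_⟩
  rw [hKnbr2]
  ext z
  simp only [Set.mem_inter_iff, Set.mem_diff, Set.mem_singleton_iff, and_congr_right_iff]
  intro hz
  constructor
  · exact fun h => h.1
  · intro h
    exact ⟨h, fun hzy => H.irrefl (hzy ▸ hz)⟩


private def inducedHom (H : SimpleGraph V) {X Y : Set V} (hXY : X ⊆ Y) :
    H.induce X →g H.induce Y where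
  toFun := fun a => ⟨a.val, hXY a.prop⟩
  map_rel' := fun h => h

private lemma reach_avoid {S : Set V} {yv : V} :
    ∀ {a b : ↥S} (p : (H.induce S).Walk a b) (ha : (a : V) ≠ yv) (hb : (b : V) ≠ yv),
      (∀ c ∈ p.support, (c : V) ≠ yv) →
      (H.induce (S \ {yv})).Reachable ⟨(a : V), a.prop, ha⟩ ⟨(b : V), b.prop, hb⟩ := by
  intro a b p
  induction p with
  | nil =>
    intro ha hb _
    exact Reachable.refl _
  | @cons a c b h p ih =>
    intro ha hb hp
    have hc : (c : V) ≠ yv := hp c (by simp [SimpleGraph.Walk.support_cons])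
    have hstep : (H.induce (S \ {yv})).Adj ⟨(a : V), a.prop, ha⟩ ⟨(c : V), c.prop, hc⟩ := h
    refine hstep.reachable.trans (ih hc hb ?_)
    intro d hd
    exact hp d (by simp [SimpleGraph.Walk.support_cons, hd])

private lemma supp_comp {S : Set V} {a b : ↥S} (p : (H.induce S).Walk a b)
    [DecidableEq ↥S]
    {c : ↥S} (hc : c ∈ p.support) :
    (H.induce S).connectedComponentMk c = (H.induce S).connectedComponentMk a :=
  (ConnectedComponent.sound ⟨p.takeUntil c hc⟩).symm

private lemma comp_attach {S : Set V} {x : V} (hxS : x ∉ S)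
    {Gx : H.Subgraph} (hGxW : Gx.verts ⊆ insert x S) (hGxconn : Gx.coe.Connected)
    (hxGx : x ∈ Gx.verts)
    {y : V} (hyG : y ∈ Gx.verts) (hyS : y ∈ S) :
    ∃ (c : V) (hc : c ∈ S), H.Adj x c ∧
      (H.induce S).connectedComponentMk ⟨c, hc⟩
        = (H.induce S).connectedComponentMk ⟨y, hyS⟩ := by
  have main : ∀ (a b : Gx.verts) (p : Gx.coe.Walk a b), (b : V) = x →
      ∀ (haS : (a : V) ∈ S),
      ∃ (c : V) (hc : c ∈ S), H.Adj x c ∧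
        (H.induce S).connectedComponentMk ⟨c, hc⟩
          = (H.induce S).connectedComponentMk ⟨(a : V), haS⟩ := by
    intro a b p
    induction p with
    | nil =>
      intro hbx haS
      exact absurd (hbx ▸ haS) hxS
    | @cons a c b h p ih =>
      intro hbx haS
      by_cases hcx : (c : V) = x
      · have hadj : H.Adj (a : V) (c : V) := Gx.adj_sub h
        rw [hcx] at hadj
        exact ⟨(a : V), haS, hadj.symm, rfl⟩
      · have hcS : (c : V) ∈ S := (hGxW c.prop).resolve_left hcx
        obtain ⟨cc, hcc, hadjcc, hcomp⟩ := ih hbx hcS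
        refine ⟨cc, hcc, hadjcc, hcomp.trans ?_⟩
        apply ConnectedComponent.sound
        have hstep : (H.induce S).Adj ⟨(c : V), hcS⟩ ⟨(a : V), haS⟩ := (Gx.adj_sub h).symm
        exact hstep.reachable
  obtain ⟨p⟩ := hGxconn.preconnected ⟨y, hyG⟩ ⟨x, hxGx⟩
  exact main _ _ p rfl hyS

private lemma A_closed {S : Set V} {x : V} (hxS : x ∉ S)
    {Gx : H.Subgraph} (hGxW : Gx.verts ⊆ insert x S)
    (P2 : ∀ y ∈ Gx.verts, y ≠ x →
      y ∈ S ∧ Gx.neighborSet y = H.neighborSet y ∩ (insert x S))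
    {y : V} (hyG : y ∈ Gx.verts) (hyx : y ≠ x) (hyS : y ∈ S) :
    ∀ (t : ↥S), (H.induce S).connectedComponentMk t
      = (H.induce S).connectedComponentMk ⟨y, hyS⟩ → (t : V) ∈ Gx.verts := by
  have main : ∀ (a b : ↥S) (p : (H.induce S).Walk a b),
      (a : V) ∈ Gx.verts → (b : V) ∈ Gx.verts := by
    intro a b p
    induction p with
    | nil => exact id
    | @cons a c b h p ih =>
      intro ha
      apply ih
      have hane : (a : V) ≠ x := fun hax => hxS (hax ▸ a.prop)
      have hnbr := (P2 (a : V) ha hane).2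
      have hmem : (c : V) ∈ Gx.neighborSet (a : V) := by
        rw [hnbr]
        exact ⟨h, Set.mem_insert_of_mem _ c.prop⟩
      exact Gx.neighborSet_subset_verts (a : V) hmem
  intro t ht
  obtain ⟨p⟩ := ConnectedComponent.exact ht
  exact main _ _ p.reverse hyG

private lemma A_conn [DecidableRel G.Adj] [DecidableRel H.Adj]
    (hGconn : G.Connected) (hΔd : G.minDegree ≤ H.maxDegree)
    {S : Set V} (hS : MaxFreeSubset G H S)
    (hreg : ∀ T : Set V, MaxFreeSubset G H T →
      regCount H S (H.maxDegree - G.minDegree) ≤ regCount H T (H.maxDegree - G.minDegree))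
    (hcomp : ∀ T : Set V, MaxFreeSubset G H T →
      regCount H T (H.maxDegree - G.minDegree) = regCount H S (H.maxDegree - G.minDegree) →
      compCount H S ≤ compCount H T)
    {H₀ : H.Subgraph} (hH₀ : IsRegConnSubgraphOff H S (H.maxDegree - G.minDegree) H₀)
    {x : V} (hx : x ∈ H₀.verts)
    {Gx : H.Subgraph} (hGx : IsCopyIn G H (insert x S) Gx)
    (hGxU : ∀ K : H.Subgraph, IsCopyIn G H (insert x S) K → K = Gx)
    {y z : V} (hyG : y ∈ Gx.verts) (hzG : z ∈ Gx.verts) (hyx : y ≠ x) (hzx : z ≠ x)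
    (hyS : y ∈ S) (hzS : z ∈ S) :
    (H.induce S).connectedComponentMk ⟨y, hyS⟩
      = (H.induce S).connectedComponentMk ⟨z, hzS⟩ := by
  classical
  by_contra hne
  have hxS : x ∉ S := fun h => (hH₀.1 hx) h
  obtain ⟨hxGx, hP1, P2⟩ := structure_lemma hΔd hS hreg hH₀ hx hGx hGxU
  have hGxconn : Gx.coe.Connected := by
    obtain ⟨φ⟩ := hGx.2
    exact SimpleGraph.Connected.map φ.symm.toHom φ.symm.surjective hGconn
  obtain ⟨x₁, hx₁S, hadj₁, hcomp₁⟩ := comp_attach hxS hGx.1 hGxconn hxGx hyG hyS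
  set Gi := H.induce S with hGi
  set κ := Gi.connectedComponentMk ⟨x₁, hx₁S⟩ with hκ
  haveI : Fintype ↥S := Fintype.ofFinite ↥S
  obtain ⟨ystar, hystarD, hmax⟩ := Finset.exists_max_image
      (Finset.univ.filter (fun t : ↥S => Gi.connectedComponentMk t = κ))
      (fun t => Gi.dist ⟨x₁, hx₁S⟩ t)
      ⟨⟨x₁, hx₁S⟩, by simp [hκ]⟩
  rw [Finset.mem_filter] at hystarD
  have hystarκ : Gi.connectedComponentMk ystar = κ := hystarD.2
  have hmax' : ∀ t : ↥S, Gi.connectedComponentMk t = κ →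
      Gi.dist ⟨x₁, hx₁S⟩ t ≤ Gi.dist ⟨x₁, hx₁S⟩ ystar := fun t ht =>
    hmax t (Finset.mem_filter.mpr ⟨Finset.mem_univ _, ht⟩)
  have hystarG : (ystar : V) ∈ Gx.verts := by
    apply A_closed hxS hGx.1 P2 hyG hyx hyS ystar
    exact hystarκ.trans hcomp₁
  have hystarx : (ystar : V) ≠ x := fun h => hxS (h ▸ ystar.prop)
  -- shortest-walk surgery: walks to x₁ from the component of x₁ can avoid ystar
  have SC : ∀ (t : ↥S), Gi.connectedComponentMk t = κ → t ≠ ystar →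
      ∃ p : Gi.Walk t ⟨x₁, hx₁S⟩, ∀ c ∈ p.support, c ≠ ystar := by
    intro t ht htne
    have hreach : Gi.Reachable t ⟨x₁, hx₁S⟩ := ConnectedComponent.exact ht
    obtain ⟨p, hp⟩ := hreach.exists_walk_length_eq_dist
    refine ⟨p, fun c hc hceq => ?_⟩
    have hsplit := p.take_spec hc
    have hlen : (p.takeUntil c hc).length + (p.dropUntil c hc).length = p.length := by
      rw [← SimpleGraph.Walk.length_append, hsplit]
    have h1 : 1 ≤ (p.takeUntil c hc).length := by
      rcases Nat.eq_zero_or_pos (p.takeUntil c hc).length with h0 | h0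
      · exact absurd (SimpleGraph.Walk.eq_of_length_eq_zero h0) (hceq ▸ htne)
      · exact h0
    have h2 : Gi.dist ⟨x₁, hx₁S⟩ c ≤ (p.dropUntil c hc).length := by
      rw [SimpleGraph.dist_comm]
      exact SimpleGraph.dist_le _
    have h3 : Gi.dist ⟨x₁, hx₁S⟩ t ≤ Gi.dist ⟨x₁, hx₁S⟩ ystar :=
      hmax' t ht
    have h4 : p.length = Gi.dist ⟨x₁, hx₁S⟩ t := by
      rw [hp, SimpleGraph.dist_comm]
    have h5 : Gi.dist ⟨x₁, hx₁S⟩ c = Gi.dist ⟨x₁, hx₁S⟩ ystar := by rw [hceq]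
    omega
  set T : Set V := insert x S \ {(ystar : V)} with hTdef
  obtain ⟨hTmax, hTcount, -⟩ := swap_lemma hΔd hS hreg hH₀ hx hGx hGxU hystarG hystarx
  have hxT : x ∈ T := ⟨Set.mem_insert _ _, fun h => hystarx ((by simpa using h : x = (ystar : V))).symm⟩
  have hsubT : S \ {(ystar : V)} ⊆ T := fun v hv => ⟨Set.mem_insert_of_mem _ hv.1, hv.2⟩
  have hmemT : ∀ (t : ↥S), t ≠ ystar → (t : V) ∈ T := fun t htne =>
    hsubT ⟨t.prop, fun he => htne (Subtype.ext he)⟩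
  -- x₁ is not ystar whenever some other vertex is in the component of x₁
  have hx₁ne : ∀ (t : ↥S), Gi.connectedComponentMk t = κ → t ≠ ystar →
      (⟨x₁, hx₁S⟩ : ↥S) ≠ ystar := by
    intro t htκ htne h
    have h0 : Gi.dist ⟨x₁, hx₁S⟩ ystar = 0 := by
      rw [← h]; exact SimpleGraph.dist_self
    have h1 := hmax' t htκ
    rw [h0, Nat.le_zero] at h1
    have hreach : Gi.Reachable ⟨x₁, hx₁S⟩ t := (ConnectedComponent.exact htκ).symm
    exact htne ((hreach.dist_eq_zero_iff.mp h1) ▸ h)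
  have toT : ∀ (t : ↥S) (htκ : Gi.connectedComponentMk t = κ) (htne : t ≠ ystar),
      (H.induce T).connectedComponentMk ⟨(t : V), hmemT t htne⟩
        = (H.induce T).connectedComponentMk ⟨x, hxT⟩ := by
    intro t htκ htne
    obtain ⟨p, hpavoid⟩ := SC t htκ htne
    have hx₁ne' : (⟨x₁, hx₁S⟩ : ↥S) ≠ ystar := hx₁ne t htκ htne
    have hr1 := reach_avoid (H := H) p (fun h => htne (Subtype.ext h))
      (fun h => hx₁ne' (Subtype.ext h))
      (fun c hc h => hpavoid c hc (Subtype.ext h))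
    have hr2 := hr1.map (inducedHom H hsubT)
    have e1 : (H.induce T).connectedComponentMk ⟨(t : V), hmemT t htne⟩
        = (H.induce T).connectedComponentMk ⟨x₁, hmemT ⟨x₁, hx₁S⟩ hx₁ne'⟩ :=
      ConnectedComponent.sound hr2
    refine e1.trans (ConnectedComponent.sound ?_)
    have hedge : (H.induce T).Adj ⟨x₁, hmemT ⟨x₁, hx₁S⟩ hx₁ne'⟩ ⟨x, hxT⟩ := hadj₁.symm
    exact hedge.reachable
  have toT2 : ∀ (t : ↥S) (htne : t ≠ ystar),
      Gi.connectedComponentMk t ≠ Gi.connectedComponentMk ystar →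
      ∀ (c : V) (hc : c ∈ S), H.Adj x c →
      Gi.connectedComponentMk ⟨c, hc⟩ = Gi.connectedComponentMk t →
      (H.induce T).connectedComponentMk ⟨(t : V), hmemT t htne⟩
        = (H.induce T).connectedComponentMk ⟨x, hxT⟩ := by
    intro t htne htκ c hc hadjc hcompc
    have hreach : Gi.Reachable t ⟨c, hc⟩ := ConnectedComponent.exact hcompc.symm
    obtain ⟨p⟩ := hreach
    have hcne : (⟨c, hc⟩ : ↥S) ≠ ystar := by
      intro h
      exact htκ (hcompc.symm.trans (h ▸ rfl) : _)
    have hpavoid : ∀ s ∈ p.support, s ≠ ystar := by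
      intro s hs hseq
      apply htκ
      rw [← supp_comp p hs, hseq]
    have hr1 := reach_avoid (H := H) p (fun h => htne (Subtype.ext h))
      (fun h => hcne (Subtype.ext h))
      (fun s hs h => hpavoid s hs (Subtype.ext h))
    have hr2 := hr1.map (inducedHom H hsubT)
    have e1 : (H.induce T).connectedComponentMk ⟨(t : V), hmemT t htne⟩
        = (H.induce T).connectedComponentMk ⟨c, hmemT ⟨c, hc⟩ hcne⟩ :=
      ConnectedComponent.sound hr2
    refine e1.trans (ConnectedComponent.sound ?_)
    have hedge : (H.induce T).Adj ⟨c, hmemT ⟨c, hc⟩ hcne⟩ ⟨x, hxT⟩ := hadjc.symm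
    exact hedge.reachable
  -- the collapsing map
  set f : ↥S → (H.induce T).ConnectedComponent := fun t =>
    if h : t = ystar then (H.induce T).connectedComponentMk ⟨x, hxT⟩
    else (H.induce T).connectedComponentMk ⟨(t : V), hmemT t h⟩ with hf
  have hadjconst : ∀ (a b : ↥S), Gi.Adj a b → f a = f b := by
    intro a b hab
    by_cases ha : a = ystar <;> by_cases hb : b = ystar
    · subst ha; subst hb; exact (Gi.loopless.irrefl _ hab).elim
    · subst ha
      rw [hf]
      simp only [dif_pos rfl, dif_neg hb]
      refine (toT b ?_ hb).symm
      exact (ConnectedComponent.connectedComponentMk_eq_of_adj hab.symm).trans hystarκ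
    · subst hb
      rw [hf]
      simp only [dif_neg ha, dif_pos rfl]
      refine toT a ?_ ha
      exact (ConnectedComponent.connectedComponentMk_eq_of_adj hab).trans hystarκ
    · rw [hf]
      simp only [dif_neg ha, dif_neg hb]
      apply ConnectedComponent.sound
      have hedge : (H.induce T).Adj ⟨(a : V), hmemT a ha⟩ ⟨(b : V), hmemT b hb⟩ := hab
      exact hedge.reachable
  have hresp : ∀ (a b : ↥S), Gi.Reachable a b → f a = f b := by
    intro a b h
    obtain ⟨p⟩ := h
    induction p with
    | nil => rfl
    | cons h p ih => exact (hadjconst _ _ h).trans ih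
  set j : Gi.ConnectedComponent → (H.induce T).ConnectedComponent :=
    ConnectedComponent.lift f (fun v w p _ => hresp v w ⟨p⟩) with hj
  have hjsurj : Function.Surjective j := by
    intro κT
    induction κT using ConnectedComponent.ind with
    | _ t =>
      by_cases hteq : (t : V) = x
      · refine ⟨Gi.connectedComponentMk ystar, ?_⟩
        show f ystar = _
        rw [hf]
        simp only [dif_pos rfl]
        have hvert : (⟨x, hxT⟩ : ↥T) = t := Subtype.ext hteq.symm
        rw [hvert]
        simp
      · have htS : (t : V) ∈ S := (t.prop.1).resolve_left hteq
        have htne : (⟨(t : V), htS⟩ : ↥S) ≠ ystar := fun h => t.prop.2 (congrArg Subtype.val h)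
        refine ⟨Gi.connectedComponentMk ⟨(t : V), htS⟩, ?_⟩
        show f _ = _
        rw [hf]
        simp only [dif_neg htne]
  -- j collapses the components of y and z
  have hyκ : Gi.connectedComponentMk ⟨y, hyS⟩ = κ := hcomp₁.symm
  have hjy : j (Gi.connectedComponentMk ⟨y, hyS⟩)
      = (H.induce T).connectedComponentMk ⟨x, hxT⟩ := by
    show f _ = _
    rw [hf]
    by_cases hyne : (⟨y, hyS⟩ : ↥S) = ystar
    · simp only [dif_pos hyne]
    · simp only [dif_neg hyne]
      exact toT _ hyκ hyne
  have hzκ : Gi.connectedComponentMk ⟨z, hzS⟩ ≠ κ := by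
    intro h
    exact hne (hyκ.trans h.symm)
  obtain ⟨x₂, hx₂S, hadj₂, hcomp₂⟩ := comp_attach hxS hGx.1 hGxconn hxGx hzG hzS
  have hzne : (⟨z, hzS⟩ : ↥S) ≠ ystar := by
    intro h
    exact hzκ (h ▸ hystarκ)
  have hjz : j (Gi.connectedComponentMk ⟨z, hzS⟩)
      = (H.induce T).connectedComponentMk ⟨x, hxT⟩ := by
    show f _ = _
    rw [hf]
    simp only [dif_neg hzne]
    refine toT2 _ hzne ?_ x₂ hx₂S hadj₂ hcomp₂
    intro h
    exact hzκ (h.trans hystarκ)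
  have hjninj : ¬ Function.Injective j := by
    intro hinj
    exact hne (hinj (hjy.trans hjz.symm))
  haveI : Fintype Gi.ConnectedComponent := Fintype.ofFinite _
  haveI : Fintype (H.induce T).ConnectedComponent := Fintype.ofFinite _
  have hlt : Fintype.card ((H.induce T).ConnectedComponent)
      < Fintype.card (Gi.ConnectedComponent) :=
    Fintype.card_lt_of_surjective_not_injective j hjsurj hjninj
  have hcc := hcomp T hTmax hTcount
  have hcc' : Nat.card Gi.ConnectedComponent
      ≤ Nat.card ((H.induce T).ConnectedComponent) := hcc
  rw [Nat.card_eq_fintype_card, Nat.card_eq_fintype_card] at hcc'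
  omega

end ClaimFourAux

/-- **Claim 4.**  With `S` as before, let `H₀` be a connected `(Δ(H) - d)`-regular
subgraph of `H ∖ S`, and for `v, w ∈ V(H₀)` let `Gv` and `Gw` be the unique copies of
`G` in `H[S ∪ {v}]` and `H[S ∪ {w}]` respectively.  If `v ≠ w` and
`Gv - v ≠ Gw - w`, then `v` and `w` have no common neighbor in `S`. -/
theorem no_common_neighbor_of_different_deleted_copies
    {α : Type*} [Fintype α] (G : SimpleGraph α) [DecidableRel G.Adj]
    {V : Type*} [Fintype V] (H : SimpleGraph V) [DecidableRel H.Adj]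
    (hGconn : G.Connected) (hHconn : H.Connected)
    (hd : 1 ≤ G.minDegree) (hΔd : G.minDegree ≤ H.maxDegree)
    (S : Set V) (hS : MaxFreeSubset G H S)
    (hreg : ∀ T : Set V, MaxFreeSubset G H T →
      regCount H S (H.maxDegree - G.minDegree) ≤ regCount H T (H.maxDegree - G.minDegree))
    (hcomp : ∀ T : Set V, MaxFreeSubset G H T →
      regCount H T (H.maxDegree - G.minDegree) = regCount H S (H.maxDegree - G.minDegree) →
      compCount H S ≤ compCount H T)
    (H₀ : H.Subgraph) (hH₀ : IsRegConnSubgraphOff H S (H.maxDegree - G.minDegree) H₀)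
    (v w : V) (hv : v ∈ H₀.verts) (hw : w ∈ H₀.verts) (hvw : v ≠ w)
    (Gv Gw : H.Subgraph)
    (hGv : IsCopyIn G H (insert v S) Gv)
    (hGvUnique : ∀ K : H.Subgraph, IsCopyIn G H (insert v S) K → K = Gv)
    (hGw : IsCopyIn G H (insert w S) Gw)
    (hGwUnique : ∀ K : H.Subgraph, IsCopyIn G H (insert w S) K → K = Gw)
    (hdiff : Gv.deleteVerts {v} ≠ Gw.deleteVerts {w}) :
    H.neighborSet v ∩ H.neighborSet w ∩ S = ∅ := by
  classical
  by_contra hne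
  obtain ⟨u, hu⟩ := Set.nonempty_iff_ne_empty.mpr hne
  obtain ⟨⟨huv, huw⟩, huS⟩ := hu
  have hvS : v ∉ S := fun h => (hH₀.1 hv) h
  have hwS : w ∉ S := fun h => (hH₀.1 hw) h
  obtain ⟨hvGv, hP1v, P2v⟩ := structure_lemma hΔd hS hreg hH₀ hv hGv hGvUnique
  obtain ⟨hwGw, hP1w, P2w⟩ := structure_lemma hΔd hS hreg hH₀ hw hGw hGwUnique
  have huv' : u ∈ Gv.neighborSet v := by
    rw [hP1v]; exact ⟨huv, huS⟩
  have huGv : u ∈ Gv.verts := Gv.neighborSet_subset_verts v huv'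
  have huw' : u ∈ Gw.neighborSet w := by
    rw [hP1w]; exact ⟨huw, huS⟩
  have huGw : u ∈ Gw.verts := Gw.neighborSet_subset_verts w huw'
  have huv_ne : u ≠ v := fun h => hvS (h ▸ huS)
  have huw_ne : u ≠ w := fun h => hwS (h ▸ huS)
  have hAB : Gv.verts \ {v} = Gw.verts \ {w} := by
    ext t
    constructor
    · rintro ⟨htGv, htv⟩
      have htv' : t ≠ v := by simpa using htv
      have htS : t ∈ S := (hGv.1 htGv).resolve_left htv'
      have hcompt : (H.induce S).connectedComponentMk ⟨t, htS⟩
          = (H.induce S).connectedComponentMk ⟨u, huS⟩ :=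
        A_conn hGconn hΔd hS hreg hcomp hH₀ hv hGv hGvUnique htGv huGv htv' huv_ne htS huS
      have htGw : t ∈ Gw.verts :=
        A_closed hwS hGw.1 P2w huGw huw_ne huS ⟨t, htS⟩ hcompt
      exact ⟨htGw, by simpa using (fun h => hwS (h ▸ htS) : t ≠ w)⟩
    · rintro ⟨htGw, htw⟩
      have htw' : t ≠ w := by simpa using htw
      have htS : t ∈ S := (hGw.1 htGw).resolve_left htw'
      have hcompt : (H.induce S).connectedComponentMk ⟨t, htS⟩
          = (H.induce S).connectedComponentMk ⟨u, huS⟩ :=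
        A_conn hGconn hΔd hS hreg hcomp hH₀ hw hGw hGwUnique htGw huGw htw' huw_ne htS huS
      have htGv : t ∈ Gv.verts :=
        A_closed hvS hGv.1 P2v huGv huv_ne huS ⟨t, htS⟩ hcompt
      exact ⟨htGv, by simpa using (fun h => hvS (h ▸ htS) : t ≠ v)⟩
  apply hdiff
  refine SimpleGraph.Subgraph.ext ?_ ?_
  · rw [SimpleGraph.Subgraph.deleteVerts_verts, SimpleGraph.Subgraph.deleteVerts_verts]
    exact hAB
  · funext a b
    apply propext
    rw [SimpleGraph.Subgraph.deleteVerts_adj, SimpleGraph.Subgraph.deleteVerts_adj]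
    constructor
    · rintro ⟨haGv, hav, hbGv, hbv, hadj⟩
      have hav' : a ≠ v := by simpa using hav
      have hbv' : b ≠ v := by simpa using hbv
      have haS : a ∈ S := (hGv.1 haGv).resolve_left hav'
      have hbS : b ∈ S := (hGv.1 hbGv).resolve_left hbv'
      have haw : a ∈ Gw.verts \ {w} := hAB ▸ (⟨haGv, hav⟩ : a ∈ Gv.verts \ {v})
      have hbw : b ∈ Gw.verts \ {w} := hAB ▸ (⟨hbGv, hbv⟩ : b ∈ Gv.verts \ {v})
      refine ⟨haw.1, haw.2, hbw.1, hbw.2, ?_⟩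
      have hnbr := (P2w a haw.1 (by simpa using haw.2)).2
      have : b ∈ Gw.neighborSet a := by
        rw [hnbr]
        exact ⟨hadj.adj_sub, Set.mem_insert_of_mem _ hbS⟩
      exact this
    · rintro ⟨haGw, haw, hbGw, hbw, hadj⟩
      have haw' : a ≠ w := by simpa using haw
      have hbw' : b ≠ w := by simpa using hbw
      have haS : a ∈ S := (hGw.1 haGw).resolve_left haw'
      have hbS : b ∈ S := (hGw.1 hbGw).resolve_left hbw'
      have hav : a ∈ Gv.verts \ {v} := hAB.symm ▸ (⟨haGw, haw⟩ : a ∈ Gw.verts \ {w})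
      have hbv : b ∈ Gv.verts \ {v} := hAB.symm ▸ (⟨hbGw, hbw⟩ : b ∈ Gw.verts \ {w})
      refine ⟨hav.1, hav.2, hbv.1, hbv.2, ?_⟩
      have hnbr := (P2v a hav.1 (by simpa using hav.2)).2
      have : b ∈ Gv.neighborSet a := by
        rw [hnbr]
        exact ⟨hadj.adj_sub, Set.mem_insert_of_mem _ hbS⟩
      exact this
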